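/- Let m and k be integers with m ≥ 1, and suppose that one of the following three conditions holds: (B.1) k − m ≡ 0 (mod 3) and k − m ≥ 0; (B.2) k − m ≡ 1 (mod 3) and k − m ≥ 4; (B.3) k − m ≡ 2 (mod 3) and k − m ≥ 8. Then there exist integer vectors a = (a₁, a₂, a₃, a₄) ∈ ℤ⁴ and b = (b₁, …, b_{2m}) ∈ ℤ^{2m} such that every entry bⱼ belongs to {1, 3} (in particular every bⱼ is nonzero), the sum a₁ + a₂ + a₃ + a₄ + b₁ + ⋯ + b_{2m} is even, and 3·(a₁² + a₂² + a₃² + a₄²) + (b₁² + ⋯ + b_{2m}²) = 2k. -/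
import Mathlib

private lemma sum_if_lt' (n t : ℕ) (ht : t ≤ n) (c d : ℤ) :
    ∑ j : Fin n, (if (j:ℕ) < t then c else d) = t * c + ((n:ℤ) - t) * d := by
  rw [Fin.sum_univ_eq_sum_range (fun i => if i < t then c else d)]
  induction n with
  | zero => simp [Nat.le_zero.mp ht]
  | succ n ih =>
    rw [Finset.sum_range_succ]
    rcases Nat.lt_or_ge n t with h | h
    · have hn : t = n + 1 := by omega
      subst hn
      rw [if_pos h, Finset.sum_congr rfl (fun x hx => if_pos (by simp at hx; omega))]
      simp
      ring
    · rw [ih (by omega), if_neg (by omega)]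
      push_cast; ring

private lemma sq_mod_two (x : ℕ) : x ^ 2 % 2 = x % 2 := by
  rcases Nat.mod_two_eq_zero_or_one x with h | h <;>
    simp [pow_two, Nat.mul_mod, h]

/-- Solvability (dimension `4m+2` case): under the stated congruence and size
conditions on `k - m`, there exist `a ∈ ℤ⁴` and `b ∈ ℤ^{2m}` with all `bⱼ ∈ {1, 3}`,
`Σaᵢ + Σbⱼ` even, and `3‖a‖² + ‖b‖² = 2k`. -/
theorem stringc_witten_index_exists_4m_plus_2 (m : ℕ) (hm : 1 ≤ m) (k : ℤ)
    (h : ((k - (m : ℤ)) % 3 = 0 ∧ 0 ≤ k - (m : ℤ)) ∨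
         ((k - (m : ℤ)) % 3 = 1 ∧ 4 ≤ k - (m : ℤ)) ∨
         ((k - (m : ℤ)) % 3 = 2 ∧ 8 ≤ k - (m : ℤ))) :
    ∃ (a : Fin 4 → ℤ) (b : Fin (2 * m) → ℤ),
      (∀ j, b j = 1 ∨ b j = 3) ∧
      Even ((∑ i, a i) + ∑ j, b j) ∧
      3 * (∑ i, (a i) ^ 2) + (∑ j, (b j) ^ 2) = 2 * k := by
  obtain ⟨t, N, htm, hNe, hkey⟩ :
      ∃ (t N : ℕ), t ≤ 2 * m ∧ N % 2 = 0 ∧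
        3 * (N : ℤ) + 8 * t + 2 * m = 2 * k := by
    rcases h with ⟨h0, h0'⟩ | ⟨h1, h1'⟩ | ⟨h2, h2'⟩
    · exact ⟨0, (2 * ((k - m) / 3)).toNat, by omega, by omega, by push_cast; omega⟩
    · exact ⟨1, (2 * ((k - m) / 3) - 2).toNat, by omega, by omega, by push_cast; omega⟩
    · exact ⟨2, (2 * ((k - m) / 3) - 4).toNat, by omega, by omega, by push_cast; omega⟩
  obtain ⟨w, x, y, z, hsq⟩ := Nat.sum_four_squares N
  have hb : ∑ j : Fin (2 * m), (if (j:ℕ) < t then (3:ℤ) else 1)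
      = t * 3 + ((2*m : ℤ) - t) * 1 := by
    have := sum_if_lt' (2*m) t htm 3 1; push_cast at this ⊢; exact this
  have hb2 : ∑ j : Fin (2 * m), (if (j:ℕ) < t then (3:ℤ) else 1) ^ 2
      = t * 9 + ((2*m : ℤ) - t) * 1 := by
    have h9 := sum_if_lt' (2*m) t htm 9 1
    push_cast at h9 ⊢
    rw [← h9]
    refine Finset.sum_congr rfl fun j _ => ?_
    by_cases hj : (j : ℕ) < t <;> simp [hj]
  refine ⟨![(w:ℤ), x, y, z], fun j => if (j : ℕ) < t then 3 else 1, ?_, ?_, ?_⟩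
  · intro j; by_cases hj : (j : ℕ) < t <;> simp [hj]
  · have hpar : (w + x + y + z) % 2 = 0 := by
      have h1 := sq_mod_two w; have h2 := sq_mod_two x
      have h3 := sq_mod_two y; have h4 := sq_mod_two z
      omega
    simp only [Fin.sum_univ_four, Matrix.cons_val_zero, Matrix.cons_val_one,
      Matrix.head_cons, Matrix.cons_val_two, Matrix.tail_cons, Matrix.cons_val_three, hb]
    obtain ⟨c, hc⟩ : ∃ c : ℕ, w + x + y + z = 2 * c := ⟨(w + x + y + z) / 2, by omega⟩
    exact ⟨(c : ℤ) + t + m, by omega⟩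
  · have hsq' : ((w:ℤ))^2 + (x:ℤ)^2 + (y:ℤ)^2 + (z:ℤ)^2 = (N:ℤ) := by exact_mod_cast hsq
    simp only [Fin.sum_univ_four, Matrix.cons_val_zero, Matrix.cons_val_one,
      Matrix.head_cons, Matrix.cons_val_two, Matrix.tail_cons, Matrix.cons_val_three, hb2]
    omega
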